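/- For finite abelian groups H and K, D(H ⊕ K) ≤ (D(H) − 1)·|K| + D(K). -/

import Mathlib

/-- The Davenport constant: the smallest `d` such that every multiset of `d`
elements of `G` contains a nonempty zero-sum sub-multiset. -/
noncomputable def davenport (G : Type*) [AddCommGroup G] : ℕ :=
  sInf {d | ∀ S : Multiset G, Multiset.card S = d →
    ∃ T, T ≤ S ∧ T ≠ 0 ∧ T.sum = 0}

section aux

variable {α β : Type*}

/-- Lift a sub-multiset of a mapped multiset to a sub-multiset upstairs. -/
lemma exists_preimage_of_le_map {f : α → β} :
    ∀ (s : Multiset α) (t : Multiset β), t ≤ s.map f → ∃ u ≤ s, u.map f = t := by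
  classical
  intro s
  induction s using Multiset.induction_on with
  | empty =>
    intro t ht
    simp only [Multiset.map_zero, Multiset.le_zero] at ht
    exact ⟨0, le_refl _, by simp [ht]⟩
  | cons a s ih =>
    intro t ht
    rw [Multiset.map_cons] at ht
    by_cases h : f a ∈ t
    · have h1 : t.erase (f a) ≤ s.map f := Multiset.erase_le_iff_le_cons.mpr ht
      obtain ⟨u, hu, hufa⟩ := ih _ h1
      refine ⟨a ::ₘ u, Multiset.cons_le_cons _ hu, ?_⟩
      rw [Multiset.map_cons, hufa, Multiset.cons_erase h]
    · have h1 : t ≤ s.map f := (Multiset.le_cons_of_notMem h).mp ht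
      obtain ⟨u, hu, hufa⟩ := ih _ h1
      exact ⟨u, le_trans hu (Multiset.le_cons_self _ _), hufa⟩

lemma msum_le_msum_of_le {s t : Multiset (Multiset α)} (h : s ≤ t) : s.sum ≤ t.sum := by
  obtain ⟨u, rfl⟩ := Multiset.le_iff_exists_add.mp h
  rw [Multiset.sum_add]
  exact Multiset.le_add_right _ _

lemma sum_msum_eq [AddCommMonoid α] (s : Multiset (Multiset α)) :
    s.sum.sum = (s.map Multiset.sum).sum := by
  induction s using Multiset.induction_on with
  | empty => simp
  | cons a s ih => simp [Multiset.sum_cons, ih]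

/-- Extract a zero-sum segment from a list between two equal prefix sums. -/
lemma seg_lemma [AddCommGroup α] (L : List α) (i j : ℕ) (hlt : i < j) (hj : j ≤ L.length)
    (hsum : (L.take i).sum = (L.take j).sum) :
    ∃ T, T ≤ (L : Multiset α) ∧ T ≠ 0 ∧ T.sum = 0 := by
  refine ⟨((L.drop i).take (j - i) : List α), ?_, ?_, ?_⟩
  · exact Multiset.coe_le.mpr (((L.drop i).take_sublist _).trans (L.drop_sublist _)).subperm
  · have hlen : ((L.drop i).take (j - i)).length = j - i := by
      rw [List.length_take, List.length_drop]; omega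
    intro h0
    rw [Multiset.coe_eq_zero, ← List.length_eq_zero_iff] at h0
    omega
  · have hsplit : L.take j = L.take i ++ (L.drop i).take (j - i) := by
      conv_lhs => rw [show j = i + (j - i) by omega]
      exact List.take_add
    rw [hsplit, List.sum_append] at hsum
    rw [Multiset.sum_coe]
    exact (left_eq_add.mp hsum)

/-- Pigeonhole: any multiset of `|K|` elements of a finite group has a nonempty
zero-sum sub-multiset. -/
lemma card_fintype_works (K : Type*) [AddCommGroup K] [Fintype K]
    (S : Multiset K) (hS : Multiset.card S = Fintype.card K) :
    ∃ T, T ≤ S ∧ T ≠ 0 ∧ T.sum = 0 := by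
  classical
  set n := Fintype.card K with hn
  set L := S.toList with hL
  have hlen : L.length = n := by rw [hL, Multiset.length_toList, hS]
  have hinj : ¬ Function.Injective (fun i : Fin (n + 1) => (L.take i).sum) := by
    intro hinj
    have := Fintype.card_le_of_injective _ hinj
    simp only [Fintype.card_fin, ← hn] at this
    omega
  rw [Function.not_injective_iff] at hinj
  obtain ⟨i, j, hij, hne⟩ := hinj
  have hSL : S = (L : Multiset K) := (Multiset.coe_toList S).symm
  rw [hSL]
  have hne' : (i : ℕ) ≠ (j : ℕ) := fun h => hne (Fin.ext h)
  rcases lt_or_gt_of_ne hne' with h | h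
  · exact seg_lemma L i j h (by omega) hij
  · exact seg_lemma L j i h (by omega) hij.symm

end aux


section main

variable {H K : Type*} [AddCommGroup H] [AddCommGroup K]

/-- Extract one block with zero sum of second coordinates. -/
lemma extract_one {dK : ℕ}
    (hdK : ∀ S : Multiset K, Multiset.card S = dK → ∃ T, T ≤ S ∧ T ≠ 0 ∧ T.sum = 0)
    (S : Multiset (H × K)) (h : dK ≤ Multiset.card S) :
    ∃ T, T ≤ S ∧ T ≠ 0 ∧ (T.map Prod.snd).sum = 0 ∧ Multiset.card T ≤ dK := by
  classical
  set S₀ : Multiset (H × K) := (↑(S.toList.take dK) : Multiset (H × K)) with hS₀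
  have hS₀le : S₀ ≤ S := by
    calc S₀ ≤ (↑S.toList : Multiset (H × K)) :=
          Multiset.coe_le.mpr (S.toList.take_sublist dK).subperm
      _ = S := Multiset.coe_toList S
  have hcard₀ : Multiset.card S₀ = dK := by
    rw [hS₀, Multiset.coe_card, List.length_take, Multiset.length_toList]
    omega
  obtain ⟨T', hT'le, hT'ne, hT'sum⟩ := hdK (S₀.map Prod.snd) (by rw [Multiset.card_map, hcard₀])
  obtain ⟨u, hu, humap⟩ := exists_preimage_of_le_map S₀ T' hT'le
  refine ⟨u, le_trans hu hS₀le, ?_, by rw [humap]; exact hT'sum, ?_⟩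
  · intro h0; apply hT'ne; rw [← humap, h0, Multiset.map_zero]
  · have := Multiset.card_le_card hu
    omega

/-- Extract `m` disjoint blocks, each with zero sum of second coordinates. -/
lemma extract_many {dK : ℕ}
    (hdK : ∀ S : Multiset K, Multiset.card S = dK → ∃ T, T ≤ S ∧ T ≠ 0 ∧ T.sum = 0) :
    ∀ (m : ℕ) (S : Multiset (H × K)), m * dK ≤ Multiset.card S →
      ∃ L : Multiset (Multiset (H × K)), Multiset.card L = m ∧ L.sum ≤ S ∧
        ∀ T ∈ L, T ≠ 0 ∧ (T.map Prod.snd).sum = 0 := by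
  classical
  intro m
  induction m with
  | zero => intro S _; exact ⟨0, by simp⟩
  | succ m ih =>
    intro S hS
    have h1 : dK ≤ Multiset.card S := by
      have : (m + 1) * dK = m * dK + dK := Nat.succ_mul m dK
      omega
    obtain ⟨T, hTle, hTne, hTsum, hTcard⟩ := extract_one hdK S h1
    have hsub : m * dK ≤ Multiset.card (S - T) := by
      have hc : Multiset.card (S - T) = Multiset.card S - Multiset.card T :=
        Multiset.card_sub hTle
      have : (m + 1) * dK = m * dK + dK := Nat.succ_mul m dK
      omega
    obtain ⟨L, hLcard, hLle, hLprop⟩ := ih (S - T) hsub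
    refine ⟨T ::ₘ L, by simp [hLcard], ?_, ?_⟩
    · rw [Multiset.sum_cons]
      calc T + L.sum ≤ T + (S - T) := add_le_add_right hLle T
        _ = S := by
          rw [add_comm]
          exact tsub_add_cancel_of_le hTle
    · intro T' hT'
      rcases Multiset.mem_cons.mp hT' with rfl | h
      · exact ⟨hTne, hTsum⟩
      · exact hLprop T' h

lemma fst_msum (s : Multiset (H × K)) : s.sum.1 = (s.map Prod.fst).sum := by
  induction s using Multiset.induction_on with
  | empty => simp
  | cons a s ih => simp [Multiset.sum_cons, ih]

lemma snd_msum (s : Multiset (H × K)) : s.sum.2 = (s.map Prod.snd).sum := by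
  induction s using Multiset.induction_on with
  | empty => simp
  | cons a s ih => simp [Multiset.sum_cons, ih]

end main

theorem davenport_prod_le (H K : Type*) [AddCommGroup H] [AddCommGroup K] [Fintype K] :
    davenport (H × K) ≤ (davenport H - 1) * Fintype.card K + davenport K := by
  classical
  set PH := {d | ∀ S : Multiset H, Multiset.card S = d → ∃ T, T ≤ S ∧ T ≠ 0 ∧ T.sum = 0}
    with hPHdef
  set PK := {d | ∀ S : Multiset K, Multiset.card S = d → ∃ T, T ≤ S ∧ T ≠ 0 ∧ T.sum = 0}
    with hPKdef
  set PHK := {d | ∀ S : Multiset (H × K), Multiset.card S = d → ∃ T, T ≤ S ∧ T ≠ 0 ∧ T.sum = 0}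
    with hPHKdef
  have hdavH : davenport H = sInf PH := rfl
  have hdavK : davenport K = sInf PK := rfl
  have hdavHK : davenport (H × K) = sInf PHK := rfl
  -- K facts
  have hKmem : Fintype.card K ∈ PK := fun S hS => card_fintype_works K S hS
  have hKne : PK.Nonempty := ⟨_, hKmem⟩
  have hdKmem : sInf PK ∈ PK := Nat.sInf_mem hKne
  have hdKle : sInf PK ≤ Fintype.card K := Nat.sInf_le hKmem
  by_cases hPH : PH.Nonempty
  · -- the nontrivial case
    have hdHmem : sInf PH ∈ PH := Nat.sInf_mem hPH
    have hdHpos : 1 ≤ sInf PH := by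
      by_contra hcon
      have h0 : sInf PH = 0 := by omega
      obtain ⟨T, hT, hTne, _⟩ := hdHmem (0 : Multiset H) (by simp [h0])
      exact hTne (Multiset.le_zero.mp hT)
    rw [hdavHK, hdavH, hdavK]
    apply Nat.sInf_le
    intro S hS
    have hcount : sInf PH * sInf PK ≤ Multiset.card S := by
      have h1 : sInf PH * sInf PK = (sInf PH - 1) * sInf PK + sInf PK := by
        obtain ⟨k, hk⟩ : ∃ k, sInf PH = k + 1 := ⟨sInf PH - 1, by omega⟩
        rw [hk, Nat.add_sub_cancel, Nat.succ_mul]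
      have h2 : (sInf PH - 1) * sInf PK ≤ (sInf PH - 1) * Fintype.card K :=
        Nat.mul_le_mul_left _ hdKle
      omega
    obtain ⟨L, hLcard, hLle, hLprop⟩ := extract_many hdKmem (sInf PH) S hcount
    set f : Multiset (H × K) → H := fun T => (T.map Prod.fst).sum with hf
    obtain ⟨U, hUle, hUne, hUsum⟩ := hdHmem (L.map f) (by rw [Multiset.card_map, hLcard])
    obtain ⟨V, hVle, hVmap⟩ := exists_preimage_of_le_map L U hUle
    refine ⟨V.sum, le_trans (msum_le_msum_of_le hVle) hLle, ?_, ?_⟩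
    · -- V.sum ≠ 0
      have hVne : V ≠ 0 := by
        intro h0; apply hUne; rw [← hVmap, h0, Multiset.map_zero]
      obtain ⟨a, ha⟩ := Multiset.exists_mem_of_ne_zero hVne
      have hane : a ≠ 0 := (hLprop a (Multiset.mem_of_le hVle ha)).1
      have haleq : a ≤ V.sum := by
        rw [← Multiset.cons_erase ha, Multiset.sum_cons]
        exact Multiset.le_add_right _ _
      intro h0
      rw [h0, Multiset.le_zero] at haleq
      exact hane haleq
    · -- V.sum.sum = 0
      have hkey : V.sum.sum = (V.map Multiset.sum).sum := sum_msum_eq V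
      have hfst : (V.sum.sum).1 = 0 := by
        rw [hkey, fst_msum, Multiset.map_map]
        have : (V.map (Prod.fst ∘ Multiset.sum)) = V.map f := by
          apply Multiset.map_congr rfl
          intro T _
          simp only [Function.comp_apply, hf]
          exact fst_msum T
        rw [this, hVmap, hUsum]
      have hsnd : (V.sum.sum).2 = 0 := by
        rw [hkey, snd_msum, Multiset.map_map]
        apply Multiset.sum_eq_zero
        intro x hx
        obtain ⟨T, hT, rfl⟩ := Multiset.mem_map.mp hx
        have hTL := (hLprop T (Multiset.mem_of_le hVle hT)).2
        simp only [Function.comp_apply]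
        rw [snd_msum T]
        exact hTL
      exact Prod.ext hfst hsnd
  · -- PH empty forces PHK empty
    have hPHK : ¬ PHK.Nonempty := by
      rintro ⟨d, hd⟩
      apply hPH
      refine ⟨d, fun S hS => ?_⟩
      obtain ⟨T, hTle, hTne, hTsum⟩ := hd (S.map (fun h => ((h, 0) : H × K)))
        (by rw [Multiset.card_map, hS])
      obtain ⟨u, hu, humap⟩ := exists_preimage_of_le_map S T hTle
      refine ⟨u, hu, ?_, ?_⟩
      · intro h0; apply hTne; rw [← humap, h0, Multiset.map_zero]
      · have h1 : T.map Prod.fst = u := by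
          rw [← humap, Multiset.map_map]
          simp
        have h2 : u.sum = T.sum.1 := by rw [fst_msum, h1]
        rw [h2, hTsum]
        rfl
    rw [hdavHK, Set.not_nonempty_iff_eq_empty.mp hPHK]
    simp [Nat.sInf_empty]
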